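/- The n-th ordinary Bernoulli polynomial evaluated at a natural number r satisfies, for all n, r ≥ 0: B_n(r) = (n+1) * C(2n, n)^{-1} * ∑_{j=0}^{n} ((-1)^j / (j+1)) * C(2n, n+j) * S_r(n+r+j, r+j), where S_r denotes the r-Stirling number of the second kind. -/

import Mathlib

/-- The unsigned `r`-Stirling number of the first kind. -/
def rStirling1 (r : ℕ) : ℕ → ℕ → ℕ
  | 0, k => if r = 0 ∧ k = 0 then 1 else 0
  | n + 1, k =>
    if n + 1 < r then 0
    else if n + 1 = r then (if k = r then 1 else 0)
    else (if k = 0 then 0 else rStirling1 r n (k - 1)) + n * rStirling1 r n k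

/-- The `r`-Stirling number of the second kind. -/
def rStirling2 (r : ℕ) : ℕ → ℕ → ℕ
  | 0, k => if r = 0 ∧ k = 0 then 1 else 0
  | n + 1, k =>
    if n + 1 < r then 0
    else if n + 1 = r then (if k = r then 1 else 0)
    else (if k = 0 then 0 else rStirling2 r n (k - 1)) + k * rStirling2 r n k

lemma rStirling2_self (r k : ℕ) : rStirling2 r r k = if k = r then 1 else 0 := by
  cases r with
  | zero => simp [rStirling2, eq_comm]
  | succ m => rw [rStirling2]; simp

lemma rStirling2_of_lt (r : ℕ) : ∀ n k, k < r → rStirling2 r n k = 0 := by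
  intro n
  induction n with
  | zero => intro k hk; simp [rStirling2]; omega
  | succ m ih =>
    intro k hk
    rw [rStirling2]
    split
    · rfl
    · split
      · rw [if_neg (show k = r → False by omega)]
      · rw [ih k hk]
        rcases Nat.eq_zero_or_pos k with h | h
        · simp [h]
        · rw [if_neg (by omega), ih (k-1) (by omega)]; simp

lemma rStirling2_succ (r m k : ℕ) :
    rStirling2 r (m + r + 1) k =
      (if k = 0 then 0 else rStirling2 r (m + r) (k - 1)) + k * rStirling2 r (m + r) k := by
  rw [rStirling2]
  rw [if_neg (by omega), if_neg (by omega)]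

open Finset in
lemma rStirling2_formula (r : ℕ) : ∀ m j : ℕ,
    ((Nat.factorial j : ℚ)) * rStirling2 r (m + r) (j + r) =
      ∑ i ∈ range (j + 1), (-1 : ℚ) ^ (j - i) * (j.choose i) * ((r : ℚ) + i) ^ m := by
  intro m
  induction m with
  | zero =>
    intro j
    simp only [Nat.zero_add, pow_zero, mul_one]
    rw [rStirling2_self]
    have h2 : ∑ i ∈ range (j + 1), (-1 : ℚ) ^ (j - i) * (j.choose i)
        = ∑ i ∈ range (j + 1), (-1 : ℚ) ^ i * (j.choose i) := by
      rw [← Finset.sum_range_reflect]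
      refine Finset.sum_congr rfl fun i hi => ?_
      simp only [mem_range] at hi
      have hij : i ≤ j := by omega
      rw [show j + 1 - 1 - i = j - i from by omega, Nat.choose_symm hij,
        Nat.sub_sub_self hij]
    rw [h2]
    have hq : ∑ i ∈ range (j + 1), (-1 : ℚ) ^ i * (j.choose i)
        = if j = 0 then 1 else 0 := by
      have h := Int.alternating_sum_range_choose (n := j)
      have h2 := congrArg (fun z : ℤ => (z : ℚ)) h
      push_cast at h2
      rw [h2]
    rw [hq]
    rcases eq_or_ne j 0 with h | h
    · simp [h]
    · rw [if_neg h, if_neg (by omega), Nat.cast_zero, mul_zero]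
  | succ m ih =>
    intro j
    rw [show m + 1 + r = m + r + 1 from by omega, rStirling2_succ]
    cases j with
    | zero =>
      have h0 := ih 0
      simp only [Nat.factorial_zero, Nat.cast_one, one_mul, Finset.sum_range_one,
        Nat.zero_add, Nat.choose_self, pow_zero, Nat.cast_zero, add_zero] at h0 ⊢
      have hz : (if r = 0 then 0 else rStirling2 r (m + r) (r - 1)) = 0 := by
        rcases Nat.eq_zero_or_pos r with h | h
        · simp [h]
        · rw [if_neg (by omega), rStirling2_of_lt _ _ _ (by omega)]
      rw [hz]
      rw [Nat.cast_add, Nat.cast_zero, Nat.cast_mul, h0]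
      ring
    | succ jj =>
      have hA := ih jj
      have hB := ih (jj + 1)
      rw [if_neg (by omega)]
      have hidx : jj + 1 + r - 1 = jj + r := by omega
      rw [hidx]
      have hfact : ((Nat.factorial (jj + 1) : ℚ)) = ((jj : ℚ) + 1) * (Nat.factorial jj : ℚ) := by
        push_cast [Nat.factorial_succ]; ring
      rw [hfact] at hB
      have hT : ∑ i ∈ range (jj + 1 + 1),
            (((jj : ℚ) + 1) - i) * ((-1 : ℚ) ^ (jj + 1 - i) * ((jj + 1).choose i) * ((r : ℚ) + i) ^ m)
          = -(((jj : ℚ) + 1) *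
              ∑ i ∈ range (jj + 1), (-1 : ℚ) ^ (jj - i) * (jj.choose i) * ((r : ℚ) + i) ^ m) := by
        rw [Finset.sum_range_succ]
        rw [show ((((jj : ℚ) + 1) - ((jj + 1 : ℕ) : ℚ)) *
            ((-1 : ℚ) ^ (jj + 1 - (jj + 1)) * (((jj + 1).choose (jj + 1) : ℕ) : ℚ) * ((r : ℚ) + ((jj + 1 : ℕ) : ℚ)) ^ m)) = 0 from by
          push_cast; ring]
        rw [add_zero, Finset.mul_sum, ← Finset.sum_neg_distrib]
        refine Finset.sum_congr rfl fun i hi => ?_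
        simp only [mem_range] at hi
        have hij : i ≤ jj := by omega
        have hc : (((jj : ℚ) + 1) - i) * ((jj + 1).choose i) = ((jj : ℚ) + 1) * (jj.choose i) := by
          have h := Nat.choose_mul_succ_eq jj i
          have hcast2 := congrArg (fun z : ℕ => (z : ℚ)) h
          push_cast at hcast2
          have hsub : ((jj + 1 - i : ℕ) : ℚ) = ((jj : ℚ) + 1) - i := by
            rw [Nat.cast_sub (by omega)]; push_cast; ring
          rw [hsub] at hcast2
          linear_combination -hcast2
        have hsign : (-1 : ℚ) ^ (jj + 1 - i) = -(-1 : ℚ) ^ (jj - i) := by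
          rw [show jj + 1 - i = (jj - i) + 1 from by omega, pow_succ]; ring
        rw [hsign]
        linear_combination (-((-1 : ℚ) ^ (jj - i)) * ((r : ℚ) + i) ^ m) * hc
      have key : ∑ i ∈ range (jj + 1 + 1),
            (-1 : ℚ) ^ (jj + 1 - i) * ((jj + 1).choose i) * ((r : ℚ) + i) ^ (m + 1)
          = ((r : ℚ) + (jj + 1)) *
              (∑ i ∈ range (jj + 1 + 1), (-1 : ℚ) ^ (jj + 1 - i) * ((jj + 1).choose i) * ((r : ℚ) + i) ^ m)
            + ((jj : ℚ) + 1) *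
              (∑ i ∈ range (jj + 1), (-1 : ℚ) ^ (jj - i) * (jj.choose i) * ((r : ℚ) + i) ^ m) := by
        have step1 : ∑ i ∈ range (jj + 1 + 1),
              (-1 : ℚ) ^ (jj + 1 - i) * ((jj + 1).choose i) * ((r : ℚ) + i) ^ (m + 1)
            = ∑ i ∈ range (jj + 1 + 1),
                (((r : ℚ) + ((jj : ℚ) + 1)) * ((-1 : ℚ) ^ (jj + 1 - i) * ((jj + 1).choose i) * ((r : ℚ) + i) ^ m)
                  - (((jj : ℚ) + 1) - i) * ((-1 : ℚ) ^ (jj + 1 - i) * ((jj + 1).choose i) * ((r : ℚ) + i) ^ m)) := by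
          refine Finset.sum_congr rfl fun i hi => ?_
          have hp : ((r : ℚ) + i) ^ (m + 1) = ((r : ℚ) + i) ^ m * ((r : ℚ) + i) := by ring
          rw [hp]; ring
        rw [step1, Finset.sum_sub_distrib, ← Finset.mul_sum, hT]
        ring
      push_cast at key hA hB ⊢
      rw [hfact, key]
      linear_combination ((jj : ℚ) + 1) * hA + ((r : ℚ) + ((jj : ℚ) + 1)) * hB

open PowerSeries in
lemma coeff_exp_mul_exp_sub_one_pow (r j m : ℕ) :
    (PowerSeries.coeff m)
        (rescale (r : ℚ) (exp ℚ) * (exp ℚ - 1) ^ j)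
      = (Nat.factorial j : ℚ) * rStirling2 r (m + r) (j + r) / (Nat.factorial m) := by
  have hpow : (exp ℚ - 1) ^ j
      = ∑ i ∈ Finset.range (j + 1),
          PowerSeries.C ((-1 : ℚ) ^ (j - i) * (j.choose i)) * rescale (i : ℚ) (exp ℚ) := by
    rw [sub_eq_add_neg, add_pow]
    refine Finset.sum_congr rfl fun i hi => ?_
    rw [exp_pow_eq_rescale_exp]
    rw [show ((-1 : ℚ⟦X⟧)) = PowerSeries.C (-1) from by simp, ← map_pow,
      show ((j.choose i : ℕ) : ℚ⟦X⟧) = PowerSeries.C ((j.choose i : ℕ) : ℚ) from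
        (map_natCast (PowerSeries.C (R := ℚ)) (j.choose i)).symm, map_mul]
    ring
  rw [hpow, Finset.mul_sum, map_sum]
  have hterm : ∀ i ∈ Finset.range (j + 1),
      (PowerSeries.coeff m)
          (rescale (r : ℚ) (exp ℚ) * (PowerSeries.C ((-1 : ℚ) ^ (j - i) * (j.choose i)) *
            rescale (i : ℚ) (exp ℚ)))
        = (-1 : ℚ) ^ (j - i) * (j.choose i) * ((r : ℚ) + i) ^ m / (Nat.factorial m) := by
    intro i hi
    rw [show rescale (r : ℚ) (exp ℚ) * (PowerSeries.C ((-1 : ℚ) ^ (j - i) * (j.choose i)) *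
          rescale (i : ℚ) (exp ℚ))
        = PowerSeries.C ((-1 : ℚ) ^ (j - i) * (j.choose i)) *
            (rescale (r : ℚ) (exp ℚ) * rescale (i : ℚ) (exp ℚ)) from by ring]
    rw [exp_mul_exp_eq_exp_add, coeff_C_mul, coeff_rescale, coeff_exp]
    rw [show (algebraMap ℚ ℚ) (1 / (Nat.factorial m : ℚ)) = 1 / (Nat.factorial m : ℚ) from rfl]
    ring
  rw [Finset.sum_congr rfl hterm]
  rw [← Finset.sum_div, ← rStirling2_formula]

open PowerSeries Finset in
theorem bernoulli_poly_at_nat_eq_sum_rStirling2 (n r : ℕ) :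
    (Polynomial.bernoulli n).eval (r : ℚ) =
      ((n : ℚ) + 1) * (((2 * n).choose n : ℚ))⁻¹ *
        ∑ j ∈ Finset.range (n + 1),
          ((-1 : ℚ) ^ j / (j + 1)) * ((2 * n).choose (n + j)) *
            rStirling2 r (n + r + j) (r + j) := by
  -- the Bernoulli polynomial generating series at r
  set Bs : ℚ⟦X⟧ := PowerSeries.mk
    (fun m => (Polynomial.bernoulli m).eval (r : ℚ) / (Nat.factorial m)) with hBs
  have hBgen : Bs * (exp ℚ - 1) = X * rescale (r : ℚ) (exp ℚ) := by
    have h := Polynomial.bernoulli_generating_function (A := ℚ) (r : ℚ)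
    have hmk : Bs = PowerSeries.mk
        (fun m => Polynomial.aeval (r : ℚ) ((1 / (Nat.factorial m) : ℚ) • Polynomial.bernoulli m)) := by
      rw [hBs]
      ext m
      rw [coeff_mk, coeff_mk, map_smul, smul_eq_mul, Polynomial.coe_aeval_eq_eval]
      ring
    rw [hmk, h]
  set H : ℚ⟦X⟧ := exp ℚ - 1 with hH
  set E : ℚ⟦X⟧ := rescale (r : ℚ) (exp ℚ) with hE
  set W : ℚ⟦X⟧ := (X + 1 - exp ℚ) ^ (n + 1) with hWdef
  have hdvd : (X : ℚ⟦X⟧) ^ (2 * n + 2) ∣ W := by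
    have h2 : (X : ℚ⟦X⟧) ^ 2 ∣ (X + 1 - exp ℚ) := by
      rw [X_pow_dvd_iff]
      intro m hm
      interval_cases m <;>
        simp [coeff_exp, Nat.factorial]
    have := pow_dvd_pow_of_dvd h2 (n + 1)
    rwa [← pow_mul, show 2 * (n + 1) = 2 * n + 2 from by ring] at this
  set P : ℚ⟦X⟧ := ∑ j ∈ range (n + 1),
      PowerSeries.C ((-1 : ℚ) ^ j * (((n + 1).choose (j + 1) : ℕ) : ℚ)) *
        (H ^ j * X ^ (n - j)) with hP
  have hW : W = (∑ j ∈ range (n + 1),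
      -(H * (PowerSeries.C ((-1 : ℚ) ^ j * (((n + 1).choose (j + 1) : ℕ) : ℚ)) *
        (H ^ j * X ^ (n - j))))) + X ^ (n + 1) := by
    rw [hWdef, show (X + 1 - exp ℚ : ℚ⟦X⟧) = -H + X from by rw [hH]; ring, add_pow,
      Finset.sum_range_succ']
    congr 1
    · refine Finset.sum_congr rfl fun j hj => ?_
      simp only [mem_range] at hj
      rw [show n + 1 - (j + 1) = n - j from by omega]
      rw [neg_pow,
        show (((n + 1).choose (j + 1) : ℕ) : ℚ⟦X⟧)
            = PowerSeries.C (((n + 1).choose (j + 1) : ℕ) : ℚ) from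
          (map_natCast (PowerSeries.C (R := ℚ)) _).symm,
        show ((-1 : ℚ⟦X⟧)) = PowerSeries.C (-1) from by simp, ← map_pow, map_mul]
      rw [show ((-1 : ℚ) ^ (j + 1)) = (-1 : ℚ) * (-1) ^ j from by rw [pow_succ]; ring]
      rw [map_mul]
      simp only [map_neg, map_one]
      ring
    · simp
  have hC1 : H * P = X ^ (n + 1) - W := by
    rw [hW, hP, Finset.mul_sum, Finset.sum_neg_distrib]
    ring
  have hcoeff : (PowerSeries.coeff (2 * n)) (E * P)
      = (Polynomial.bernoulli n).eval (r : ℚ) / (Nat.factorial n) := by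
    have e1 : Bs * (H * P) = X * (E * P) := by
      rw [← mul_assoc, hBgen, mul_assoc]
    rw [hC1, mul_sub] at e1
    have e2 := congrArg (PowerSeries.coeff (2 * n + 1)) e1
    rw [map_sub, coeff_succ_X_mul] at e2
    have e3 : (PowerSeries.coeff (2 * n + 1)) (Bs * X ^ (n + 1))
        = (PowerSeries.coeff n) Bs := by
      rw [show 2 * n + 1 = n + (n + 1) from by ring, coeff_mul_X_pow]
    have e4 : (PowerSeries.coeff (2 * n + 1)) (Bs * W) = 0 := by
      have : (X : ℚ⟦X⟧) ^ (2 * n + 2) ∣ Bs * W := hdvd.mul_left Bs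
      exact (X_pow_dvd_iff.mp this) (2 * n + 1) (by omega)
    rw [e3, e4, sub_zero, hBs, coeff_mk] at e2
    rw [← e2]
  have hexp : (PowerSeries.coeff (2 * n)) (E * P)
      = ∑ j ∈ range (n + 1), (-1 : ℚ) ^ j * (((n + 1).choose (j + 1) : ℕ) : ℚ) *
          ((Nat.factorial j : ℚ) * rStirling2 r (n + j + r) (j + r) /
            (Nat.factorial (n + j))) := by
    rw [hP, Finset.mul_sum, map_sum]
    refine Finset.sum_congr rfl fun j hj => ?_
    simp only [mem_range] at hj
    rw [show E * (PowerSeries.C ((-1 : ℚ) ^ j * (((n + 1).choose (j + 1) : ℕ) : ℚ)) *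
          (H ^ j * X ^ (n - j)))
        = PowerSeries.C ((-1 : ℚ) ^ j * (((n + 1).choose (j + 1) : ℕ) : ℚ)) *
            ((E * H ^ j) * X ^ (n - j)) from by ring]
    rw [coeff_C_mul, show 2 * n = (n + j) + (n - j) from by omega, coeff_mul_X_pow,
      hE, hH, coeff_exp_mul_exp_sub_one_pow]
  -- the common value
  have hsum : ∑ j ∈ range (n + 1), (-1 : ℚ) ^ j * (((n + 1).choose (j + 1) : ℕ) : ℚ) *
          ((Nat.factorial j : ℚ) * rStirling2 r (n + j + r) (j + r) /
            (Nat.factorial (n + j)))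
      = (Polynomial.bernoulli n).eval (r : ℚ) / (Nat.factorial n) := by
    rw [← hexp, hcoeff]
  -- per-term coefficient identity
  have hcoef : ∀ j, j ≤ n →
      ((n : ℚ) + 1) * (((2 * n).choose n : ℚ))⁻¹ * ((-1 : ℚ) ^ j / (j + 1)) *
          (((2 * n).choose (n + j) : ℕ) : ℚ)
        = (Nat.factorial n : ℚ) * ((-1 : ℚ) ^ j * (((n + 1).choose (j + 1) : ℕ) : ℚ)) *
            ((Nat.factorial j : ℚ) / (Nat.factorial (n + j) : ℚ)) := by
    intro j hj
    have e1 : (((2 * n).choose (n + j) : ℕ) : ℚ)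
        = ((2 * n).factorial : ℚ) / (((n + j).factorial : ℚ) * ((n - j).factorial : ℚ)) := by
      rw [Nat.cast_choose ℚ (show n + j ≤ 2 * n from by omega),
        show 2 * n - (n + j) = n - j from by omega]
    have e2 : (((2 * n).choose n : ℕ) : ℚ)
        = ((2 * n).factorial : ℚ) / ((n.factorial : ℚ) * (n.factorial : ℚ)) := by
      rw [Nat.cast_choose ℚ (show n ≤ 2 * n from by omega),
        show 2 * n - n = n from by omega]
    have e3 : (((n + 1).choose (j + 1) : ℕ) : ℚ)
        = ((n + 1).factorial : ℚ) / (((j + 1).factorial : ℚ) * ((n - j).factorial : ℚ)) := by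
      rw [Nat.cast_choose ℚ (show j + 1 ≤ n + 1 from by omega),
        show n + 1 - (j + 1) = n - j from by omega]
    have f0 : ((2 * n).factorial : ℚ) ≠ 0 := Nat.cast_ne_zero.mpr (Nat.factorial_ne_zero _)
    have f1 : ((n).factorial : ℚ) ≠ 0 := Nat.cast_ne_zero.mpr (Nat.factorial_ne_zero _)
    have f2 : ((n + j).factorial : ℚ) ≠ 0 := Nat.cast_ne_zero.mpr (Nat.factorial_ne_zero _)
    have f3 : ((n - j).factorial : ℚ) ≠ 0 := Nat.cast_ne_zero.mpr (Nat.factorial_ne_zero _)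
    have f4 : ((j).factorial : ℚ) ≠ 0 := Nat.cast_ne_zero.mpr (Nat.factorial_ne_zero _)
    have f5 : ((j : ℚ) + 1) ≠ 0 := by positivity
    have g1 : ((n + 1).factorial : ℚ) = ((n : ℚ) + 1) * (n.factorial : ℚ) := by
      rw [Nat.factorial_succ]; push_cast; ring
    have g2 : ((j + 1).factorial : ℚ) = ((j : ℚ) + 1) * (j.factorial : ℚ) := by
      rw [Nat.factorial_succ]; push_cast; ring
    rw [e1, e2, e3, g1, g2]
    field_simp
  -- assemble
  have hfinal : ((n : ℚ) + 1) * (((2 * n).choose n : ℚ))⁻¹ *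
        ∑ j ∈ Finset.range (n + 1),
          ((-1 : ℚ) ^ j / (j + 1)) * ((2 * n).choose (n + j)) *
            rStirling2 r (n + r + j) (r + j)
      = (Nat.factorial n : ℚ) *
          ∑ j ∈ range (n + 1), (-1 : ℚ) ^ j * (((n + 1).choose (j + 1) : ℕ) : ℚ) *
            ((Nat.factorial j : ℚ) * rStirling2 r (n + j + r) (j + r) /
              (Nat.factorial (n + j))) := by
    rw [Finset.mul_sum, Finset.mul_sum]
    refine Finset.sum_congr rfl fun j hj => ?_
    simp only [mem_range] at hj
    have := hcoef j (by omega)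
    rw [show n + r + j = n + j + r from by omega, show r + j = j + r from by omega]
    calc ((n : ℚ) + 1) * (((2 * n).choose n : ℚ))⁻¹ *
          ((-1 : ℚ) ^ j / (j + 1) * ((2 * n).choose (n + j)) *
            rStirling2 r (n + j + r) (j + r))
        = (((n : ℚ) + 1) * (((2 * n).choose n : ℚ))⁻¹ * ((-1 : ℚ) ^ j / (j + 1)) *
            (((2 * n).choose (n + j) : ℕ) : ℚ)) * rStirling2 r (n + j + r) (j + r) := by ring
      _ = ((Nat.factorial n : ℚ) * ((-1 : ℚ) ^ j * (((n + 1).choose (j + 1) : ℕ) : ℚ)) *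
            ((Nat.factorial j : ℚ) / (Nat.factorial (n + j) : ℚ))) *
              rStirling2 r (n + j + r) (j + r) := by rw [this]
      _ = _ := by ring
  rw [hfinal, hsum]
  have f1 : ((n).factorial : ℚ) ≠ 0 := Nat.cast_ne_zero.mpr (Nat.factorial_ne_zero _)
  field_simp
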